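/- Let φ = ⋀_{i=1}^n (ℓ_{i1} ∨ ℓ_{i2} ∨ ℓ_{i3}) be a 3-CNF formula over variables x₁,…,x_m, and let D_φ consist of the defaults (⊤ : x_i / x_i) and (⊤ : ¬x_i / ¬x_i) for 1 ≤ i ≤ m, together with (ℓ̄_{iπ(1)} : ℓ̄_{iπ(2)} / ℓ_{iπ(3)}) for every clause i and every permutation π of {1,2,3}, where ℓ̄ denotes the literal of opposite polarity. Then φ is satisfiable if and only if the default theory ⟨∅, D_φ⟩ has a stable extension. -/

import Mathlib

inductive Form : Type where
  | var : ℕ → Form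
  | app : (n : ℕ) → ((Fin n → Bool) → Bool) → (Fin n → Form) → Form

namespace Form

def eval (σ : ℕ → Bool) : Form → Bool
  | var x => σ x
  | app _ f a => f (fun i => (a i).eval σ)

def tru : Form := app 0 (fun _ => true) (fun i => i.elim0)
def fls : Form := app 0 (fun _ => false) (fun i => i.elim0)
def neg (φ : Form) : Form := app 1 (fun v => !(v 0)) (fun _ => φ)
def conj (φ ψ : Form) : Form := app 2 (fun v => v 0 && v 1) ![φ, ψ]
def disj (φ ψ : Form) : Form := app 2 (fun v => v 0 || v 1) ![φ, ψ]

end Form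

/-- σ satisfies all formulae of A. -/
def Sat (σ : ℕ → Bool) (A : Set Form) : Prop := ∀ φ ∈ A, φ.eval σ = true

/-- Semantic consequence A ⊨ φ. -/
def Entails (A : Set Form) (φ : Form) : Prop := ∀ σ, Sat σ A → φ.eval σ = true

/-- Th(A) = {φ | A ⊨ φ}. -/
def Th (A : Set Form) : Set Form := {φ | Entails A φ}

def Consistent (A : Set Form) : Prop := ∃ σ, Sat σ A

/-- A default rule (α : β / γ). -/
structure Default where
  pre : Form
  just : Form
  con : Form

/-- S contains W, is deductively closed, and closed under defaults applicable w.r.t. E. -/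
def GammaClosed (W : Set Form) (D : Set Default) (E S : Set Form) : Prop :=
  W ⊆ S ∧ Th S = S ∧ ∀ d ∈ D, d.pre ∈ S → Form.neg d.just ∉ E → d.con ∈ S

/-- Γ(E): the smallest set satisfying the three closure conditions. -/
def Gamma (W : Set Form) (D : Set Default) (E : Set Form) : Set Form :=
  ⋂₀ {S | GammaClosed W D E S}

/-- E is a stable extension of ⟨W,D⟩. -/
def Stable (W : Set Form) (D : Set Default) (E : Set Form) : Prop :=
  Gamma W D E = E


def bigConj (l : List Form) : Form := l.foldr Form.conj Form.tru
def bigDisj (l : List Form) : Form := l.foldr Form.disj Form.fls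

/-- The formula corresponding to a literal (polarity, variable). -/
def litForm (l : Bool × ℕ) : Form :=
  if l.1 then Form.var l.2 else Form.neg (Form.var l.2)

/-- The literal of opposite polarity. -/
def oppLit (l : Bool × ℕ) : Bool × ℕ := (!l.1, l.2)

/-- The 3-CNF formula with clauses given by C over variables 0,…,m-1. -/
def cnfForm (n m : ℕ) (C : Fin n → Fin 3 → Bool × Fin m) : Form :=
  bigConj ((List.finRange n).map fun i =>
    bigDisj ((List.finRange 3).map fun j => litForm ((C i j).1, ((C i j).2 : ℕ))))

/-- The set of defaults D_φ constructed from the 3-CNF formula. -/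
def cnfDefaults (n m : ℕ) (C : Fin n → Fin 3 → Bool × Fin m) : Set Default :=
  {d | ∃ i : Fin m, d = ⟨Form.tru, Form.var i, Form.var i⟩} ∪
  {d | ∃ i : Fin m, d = ⟨Form.tru, Form.neg (Form.var i), Form.neg (Form.var i)⟩} ∪
  {d | ∃ (i : Fin n) (π : Equiv.Perm (Fin 3)),
      d = ⟨litForm (oppLit ((C i (π 0)).1, ((C i (π 0)).2 : ℕ))),
           litForm (oppLit ((C i (π 1)).1, ((C i (π 1)).2 : ℕ))),
           litForm ((C i (π 2)).1, ((C i (π 2)).2 : ℕ))⟩} 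

section Aux

variable {W E A B : Set Form} {D : Set Default}

lemma eval_tru (σ : ℕ → Bool) : Form.tru.eval σ = true := rfl

lemma eval_neg (φ : Form) (σ : ℕ → Bool) : (Form.neg φ).eval σ = !(φ.eval σ) := rfl

lemma eval_conj (φ ψ : Form) (σ : ℕ → Bool) :
    (Form.conj φ ψ).eval σ = (φ.eval σ && ψ.eval σ) := by
  show (Form.eval σ (![φ, ψ] 0) && Form.eval σ (![φ, ψ] 1)) = (φ.eval σ && ψ.eval σ)
  simp

lemma eval_disj (φ ψ : Form) (σ : ℕ → Bool) :
    (Form.disj φ ψ).eval σ = (φ.eval σ || ψ.eval σ) := by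
  show (Form.eval σ (![φ, ψ] 0) || Form.eval σ (![φ, ψ] 1)) = (φ.eval σ || ψ.eval σ)
  simp

lemma bigConj_eval (l : List Form) (σ : ℕ → Bool) :
    (bigConj l).eval σ = true ↔ ∀ φ ∈ l, φ.eval σ = true := by
  induction l with
  | nil =>
    constructor
    · intro _ φ h
      exact absurd h List.not_mem_nil
    · intro _
      rfl
  | cons a t ih =>
    simp only [bigConj, List.foldr_cons, eval_conj, Bool.and_eq_true, List.mem_cons]
    constructor
    · rintro ⟨h1, h2⟩ φ (rfl | hφ)
      · exact h1
      · exact (ih.mp h2) φ hφ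
    · intro h
      exact ⟨h a (Or.inl rfl), ih.mpr fun φ hφ => h φ (Or.inr hφ)⟩

lemma bigDisj_eval (l : List Form) (σ : ℕ → Bool) :
    (bigDisj l).eval σ = true ↔ ∃ φ ∈ l, φ.eval σ = true := by
  induction l with
  | nil =>
    constructor
    · intro h
      exact Bool.noConfusion h
    · rintro ⟨φ, hφ, -⟩
      exact absurd hφ List.not_mem_nil
  | cons a t ih =>
    simp only [bigDisj, List.foldr_cons, eval_disj, Bool.or_eq_true, List.mem_cons]
    constructor
    · rintro (h | h)
      · exact ⟨a, Or.inl rfl, h⟩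
      · obtain ⟨φ, hφ, he⟩ := ih.mp h
        exact ⟨φ, Or.inr hφ, he⟩
    · rintro ⟨φ, (rfl | hφ), he⟩
      · exact Or.inl he
      · exact Or.inr (ih.mpr ⟨φ, hφ, he⟩)

lemma cnfForm_eval (n m : ℕ) (C : Fin n → Fin 3 → Bool × Fin m) (σ : ℕ → Bool) :
    (cnfForm n m C).eval σ = true ↔
    ∀ i : Fin n, ∃ j : Fin 3, (litForm ((C i j).1, ((C i j).2 : ℕ))).eval σ = true := by
  unfold cnfForm
  rw [bigConj_eval]
  constructor
  · intro h i
    have := h _ (List.mem_map_of_mem (List.mem_finRange i))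
    rw [bigDisj_eval] at this
    obtain ⟨φ, hφ, he⟩ := this
    rw [List.mem_map] at hφ
    obtain ⟨j, -, rfl⟩ := hφ
    exact ⟨j, he⟩
  · intro h φ hφ
    rw [List.mem_map] at hφ
    obtain ⟨i, -, rfl⟩ := hφ
    rw [bigDisj_eval]
    obtain ⟨j, hj⟩ := h i
    exact ⟨_, List.mem_map_of_mem (List.mem_finRange j), hj⟩

lemma subset_Th (A : Set Form) : A ⊆ Th A := fun φ hφ σ hσ => hσ φ hφ

lemma Th_mono (h : A ⊆ B) : Th A ⊆ Th B := fun φ hφ σ hσ => hφ σ fun ψ hψ => hσ ψ (h hψ)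

lemma Th_idem (A : Set Form) : Th (Th A) = Th A := by
  apply Set.Subset.antisymm
  · intro φ hφ σ hσ
    exact hφ σ fun ψ hψ => hψ σ hσ
  · exact subset_Th _

lemma tru_mem_Th (A : Set Form) : Form.tru ∈ Th A := fun σ _ => rfl

lemma gammaClosed_Gamma : GammaClosed W D E (Gamma W D E) := by
  refine ⟨fun x hx S hS => hS.1 hx, ?_, ?_⟩
  · apply Set.Subset.antisymm
    · intro φ hφ S hS
      have h1 : Gamma W D E ⊆ S := fun x hx => hx S hS
      have := Th_mono h1 hφ
      rwa [hS.2.1] at this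
    · exact subset_Th _
  · intro d hd hpre hjust S hS
    exact hS.2.2 d hd (hpre S hS) hjust

lemma Th_subset_Gamma (h : A ⊆ Gamma W D E) : Th A ⊆ Gamma W D E := by
  have := Th_mono h
  rwa [gammaClosed_Gamma.2.1] at this

/-- An inconsistent deductively closed set is everything. -/
lemma eq_univ_of_inconsistent (hcl : Th E = E) (h : ¬ Consistent E) : E = Set.univ := by
  apply Set.eq_univ_of_forall
  intro φ
  rw [← hcl]
  intro σ hσ
  exact absurd ⟨σ, hσ⟩ h

lemma eval_litForm_opp (l : Bool × ℕ) (σ : ℕ → Bool) :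
    (litForm (oppLit l)).eval σ = !(litForm l).eval σ := by
  obtain ⟨b, j⟩ := l
  cases b <;> simp [litForm, oppLit, Form.eval, eval_neg]

end Aux

section Main

variable {n m : ℕ} {C : Fin n → Fin 3 → Bool × Fin m} {σ : ℕ → Bool}

/-- The set of literals fixed by σ on the first m variables. -/
def Lits (σ : ℕ → Bool) (m : ℕ) : Set Form :=
  {f | ∃ i : Fin m, (σ i = true ∧ f = Form.var i) ∨ (σ i = false ∧ f = Form.neg (Form.var i))}

lemma sat_Lits (σ : ℕ → Bool) (m : ℕ) : Sat σ (Lits σ m) := by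
  rintro φ ⟨i, (⟨hs, rfl⟩ | ⟨hs, rfl⟩)⟩
  · exact hs
  · rw [eval_neg]; simp [Form.eval, hs]

lemma agree_of_sat_Lits {τ : ℕ → Bool} (h : Sat τ (Lits σ m)) (i : Fin m) :
    τ i = σ i := by
  cases hs : σ (i : ℕ) with
  | true => exact h _ ⟨i, Or.inl ⟨hs, rfl⟩⟩
  | false =>
    have := h _ ⟨i, Or.inr ⟨hs, rfl⟩⟩
    rw [eval_neg] at this
    simpa [Form.eval] using this

lemma entails_Lits_iff {ψ : Form}
    (h : ∀ τ : ℕ → Bool, (∀ i : Fin m, τ i = σ i) → ψ.eval τ = ψ.eval σ) :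
    ψ ∈ Th (Lits σ m) ↔ ψ.eval σ = true := by
  constructor
  · intro he; exact he σ (sat_Lits σ m)
  · intro he τ hτ
    rw [h τ (agree_of_sat_Lits hτ)]; exact he

lemma litForm_agree (b : Bool) (j : Fin m) {τ : ℕ → Bool}
    (h : ∀ i : Fin m, τ i = σ i) :
    (litForm (b, (j : ℕ))).eval τ = (litForm (b, (j : ℕ))).eval σ := by
  cases b <;> simp [litForm, Form.eval, eval_neg, h j]

lemma litForm_mem_Th_iff (b : Bool) (j : Fin m) :
    litForm (b, (j : ℕ)) ∈ Th (Lits σ m) ↔ (litForm (b, (j : ℕ))).eval σ = true :=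
  entails_Lits_iff fun τ hτ => litForm_agree b j hτ

lemma neg_litForm_mem_Th_iff (b : Bool) (j : Fin m) :
    Form.neg (litForm (b, (j : ℕ))) ∈ Th (Lits σ m) ↔
      (litForm (b, (j : ℕ))).eval σ = false := by
  rw [entails_Lits_iff (ψ := Form.neg (litForm (b, (j : ℕ))))
      (fun τ hτ => by rw [eval_neg, eval_neg, litForm_agree b j hτ]),
    eval_neg, Bool.not_eq_true']

end Main

/-- A 3-CNF formula φ is satisfiable iff the default theory ⟨∅, D_φ⟩ has a
stable extension. -/
theorem stmt11 (n m : ℕ) (C : Fin n → Fin 3 → Bool × Fin m) :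
    (∃ σ, (cnfForm n m C).eval σ = true) ↔
    ∃ E : Set Form, Stable ∅ (cnfDefaults n m C) E := by
  constructor
  · -- Satisfiability implies a stable extension.
    rintro ⟨σ, hσ⟩
    refine ⟨Th (Lits σ m), ?_⟩
    unfold Stable
    apply Set.Subset.antisymm
    · -- Γ(E) ⊆ E : E is GammaClosed.
      intro φ hφ
      apply hφ
      refine ⟨Set.empty_subset _, Th_idem _, ?_⟩
      rintro d hd hpre hjust
      rcases hd with ((⟨i, rfl⟩ | ⟨i, rfl⟩) | ⟨i, π, rfl⟩)
      · -- (⊤ : x_i / x_i)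
        have hσi : σ (i : ℕ) = true := by
          by_contra hs
          rw [Bool.not_eq_true] at hs
          exact hjust ((neg_litForm_mem_Th_iff (σ := σ) true i).mpr (by simpa [litForm, Form.eval] using hs))
        have := (litForm_mem_Th_iff (σ := σ) true i).mpr (by simpa [litForm, Form.eval] using hσi)
        simpa [litForm] using this
      · -- (⊤ : ¬x_i / ¬x_i)
        have hσi : σ (i : ℕ) = false := by
          by_contra hs
          rw [Bool.not_eq_false] at hs
          refine hjust ?_
          have h1 : Form.neg (litForm (false, (i : ℕ))) ∈ Th (Lits σ m) :=
            (neg_litForm_mem_Th_iff (σ := σ) false i).mpr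
              (by simp [litForm, eval_neg, Form.eval, hs])
          simpa [litForm] using h1
        have := (litForm_mem_Th_iff (σ := σ) false i).mpr (by simp [litForm, eval_neg, Form.eval, hσi])
        simpa [litForm] using this
      · -- clause defaults
        simp only at hpre hjust ⊢
        have h0 : (litForm ((C i (π 0)).1, ((C i (π 0)).2 : ℕ))).eval σ = false := by
          have := hpre σ (sat_Lits σ m)
          rw [eval_litForm_opp] at this
          simpa using this
        have h1 : (litForm ((C i (π 1)).1, ((C i (π 1)).2 : ℕ))).eval σ = false := by
          by_contra hs
          rw [Bool.not_eq_false] at hs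
          apply hjust
          have : (Form.neg (litForm (oppLit ((C i (π 1)).1, ((C i (π 1)).2 : ℕ))))).eval σ
              = true := by
            rw [eval_neg, eval_litForm_opp, hs]; rfl
          intro τ hτ
          rw [eval_neg, eval_litForm_opp] at this ⊢
          rw [litForm_agree _ (C i (π 1)).2 (agree_of_sat_Lits hτ)]
          exact this
        -- some literal of clause i is true under σ
        obtain ⟨j, hj⟩ := (cnfForm_eval n m C σ).mp hσ i
        obtain ⟨k, rfl⟩ : ∃ k : Fin 3, π k = j := ⟨π.symm j, π.apply_symm_apply j⟩
        have hk0 : k ≠ 0 := by rintro rfl; rw [h0] at hj; exact Bool.noConfusion hj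
        have hk1 : k ≠ 1 := by rintro rfl; rw [h1] at hj; exact Bool.noConfusion hj
        have hk2 : k = 2 := by
          have hall : ∀ k : Fin 3, k ≠ 0 → k ≠ 1 → k = 2 := by decide
          exact hall k hk0 hk1
        subst hk2
        exact (litForm_mem_Th_iff (σ := σ) _ (C i (π 2)).2).mpr hj
    · -- E ⊆ Γ(E)
      apply Th_subset_Gamma
      rintro φ ⟨i, (⟨hs, rfl⟩ | ⟨hs, rfl⟩)⟩
      · refine gammaClosed_Gamma.2.2 ⟨Form.tru, Form.var i, Form.var i⟩
          (Or.inl (Or.inl ⟨i, rfl⟩)) ?_ ?_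
        · rw [gammaClosed_Gamma.2.1.symm]; exact tru_mem_Th _
        · intro hmem
          have := (neg_litForm_mem_Th_iff (σ := σ) true i).mp (by simpa [litForm] using hmem)
          simp [litForm, Form.eval, hs] at this
      · refine gammaClosed_Gamma.2.2 ⟨Form.tru, Form.neg (Form.var i), Form.neg (Form.var i)⟩
          (Or.inl (Or.inr ⟨i, rfl⟩)) ?_ ?_
        · rw [gammaClosed_Gamma.2.1.symm]; exact tru_mem_Th _
        · intro hmem
          have := (neg_litForm_mem_Th_iff (σ := σ) false i).mp (by simpa [litForm] using hmem)
          simp [litForm, eval_neg, Form.eval, hs] at this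
  · -- A stable extension implies satisfiability.
    rintro ⟨E, hE⟩
    have hcl : GammaClosed ∅ (cnfDefaults n m C) E E := by
      have h := gammaClosed_Gamma (W := ∅) (D := cnfDefaults n m C) (E := E)
      rwa [hE] at h
    -- E is consistent
    have hcons : Consistent E := by
      by_contra h
      have huniv : E = Set.univ := eq_univ_of_inconsistent hcl.2.1 h
      -- then Γ(E) ⊆ Th ∅, so fls ∈ Th ∅, contradiction
      have hsub : Gamma ∅ (cnfDefaults n m C) E ⊆ Th ∅ := by
        intro φ hφ
        apply hφ
        refine ⟨Set.empty_subset _, Th_idem _, ?_⟩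
        intro d _ _ hjust
        exact absurd (huniv ▸ Set.mem_univ _) hjust
      have : Form.fls ∈ Th (∅ : Set Form) := by
        apply hsub
        rw [hE, huniv]; trivial
      have := this (fun _ => true) (fun ψ hψ => hψ.elim)
      exact Bool.noConfusion this
    obtain ⟨σ, hσ⟩ := hcons
    refine ⟨σ, (cnfForm_eval n m C σ).mpr ?_⟩
    have htru : Form.tru ∈ E := by rw [← hcl.2.1]; exact tru_mem_Th _
    -- each variable's literal (matching σ) is in E
    have hlit : ∀ j : Fin m, ∀ b : Bool, (litForm (b, (j : ℕ))).eval σ = true →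
        litForm (b, (j : ℕ)) ∈ E := by
      intro j b hb
      by_cases hneg : Form.neg (Form.var (j : ℕ)) ∈ E
      · -- σ j = false, so b = false, and the literal is neg (var j) ∈ E
        have hsj : σ (j : ℕ) = false := by
          have := hσ _ hneg
          rw [eval_neg] at this
          simpa [Form.eval] using this
        cases b with
        | true => simp [litForm, Form.eval, hsj] at hb
        | false => simpa [litForm] using hneg
      · -- default (⊤ : x_j / x_j) applies: var j ∈ E, so σ j = true, b = true
        have hvj : Form.var (j : ℕ) ∈ E :=
          hcl.2.2 ⟨Form.tru, Form.var j, Form.var j⟩ (Or.inl (Or.inl ⟨j, rfl⟩)) htru hneg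
        have hsj : σ (j : ℕ) = true := hσ _ hvj
        cases b with
        | true => simpa [litForm] using hvj
        | false => simp [litForm, eval_neg, Form.eval, hsj] at hb
    intro i
    by_contra hno
    push_neg at hno
    have hf : ∀ j : Fin 3, (litForm ((C i j).1, ((C i j).2 : ℕ))).eval σ = false := by
      intro j
      cases hv : (litForm ((C i j).1, ((C i j).2 : ℕ))).eval σ with
      | false => rfl
      | true => exact absurd hv (hno j)
    -- opposite literals of the first two are in E
    have hoppE : ∀ j : Fin 3, litForm (oppLit ((C i j).1, ((C i j).2 : ℕ))) ∈ E := by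
      intro j
      apply hlit (C i j).2 (!(C i j).1)
      rw [show ((!(C i j).1, ((C i j).2 : ℕ)) : Bool × ℕ)
          = oppLit ((C i j).1, ((C i j).2 : ℕ)) from rfl, eval_litForm_opp, hf j]
      rfl
    -- apply the clause default with π = identity
    have hjustno : Form.neg (litForm (oppLit ((C i 1).1, ((C i 1).2 : ℕ)))) ∉ E := by
      intro hmem
      have := hσ _ hmem
      rw [eval_neg] at this
      have h2 := hσ _ (hoppE 1)
      rw [h2] at this
      exact Bool.noConfusion this
    have hcon : litForm ((C i 2).1, ((C i 2).2 : ℕ)) ∈ E := by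
      have := hcl.2.2 ⟨litForm (oppLit ((C i 0).1, ((C i 0).2 : ℕ))),
          litForm (oppLit ((C i 1).1, ((C i 1).2 : ℕ))),
          litForm ((C i 2).1, ((C i 2).2 : ℕ))⟩ ?_ (hoppE 0) hjustno
      · exact this
      · exact Or.inr ⟨i, Equiv.refl _, rfl⟩
    have := hσ _ hcon
    rw [hf 2] at this
    exact Bool.noConfusion this
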